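/- arXiv:2006.08501 — 2 statements merged into one kernel-verified Lean document; each statement's English description precedes it below -/
import Mathlib

section
/- Let A be a unital C*-algebra whose centre is nontrivial, i.e., there exists a ∈ A commuting with every element of A such that a is not a scalar multiple of the unit. Let K be a complex Hilbert space, let R ⊆ B(K) be an operator system, and let φ : R → A be a unital completely positive linear map. Then φ is not pure in the cone CP(R, A) of completely positive linear maps. -/
open scoped ComplexOrder InnerProductSpace

/-- An `m × m` matrix of operators on a Hilbert space `K` is positive if the
corresponding operator on the direct sum `K^{⊕m}` is positive, i.e. its quadratic
form is nonnegative. -/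
def OpMatPos {K : Type*} [NormedAddCommGroup K] [InnerProductSpace ℂ K] {m : ℕ}
    (x : Fin m → Fin m → (K →L[ℂ] K)) : Prop :=
  ∀ v : Fin m → K, 0 ≤ ∑ i, ∑ j, ⟪x i j (v j), v i⟫_ℂ

/-- A matrix over a C*-algebra `A` is positive when it is a positive element
of the C*-algebra `M_m(A)`, i.e. of the form `y* y`. -/
def MatPosAlg {A : Type*} [Ring A] [StarRing A] {m : ℕ}
    (x : Matrix (Fin m) (Fin m) A) : Prop :=
  ∃ y : Matrix (Fin m) (Fin m) A, x = star y * y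

/-- Complete positivity for a linear map from an operator system `R ⊆ B(K)` into a
C*-algebra `A`: positive `m × m` operator matrices with entries in `R` are sent
(entrywise) to positive elements of `M_m(A)`. -/
def IsCPtoAlg {K : Type*} [NormedAddCommGroup K] [InnerProductSpace ℂ K]
    {A : Type*} [Ring A] [StarRing A] [Module ℂ A]
    (R : Submodule ℂ (K →L[ℂ] K)) (φ : R →ₗ[ℂ] A) : Prop :=
  ∀ (m : ℕ) (x : Fin m → Fin m → R),
    OpMatPos (fun i j => (x i j : K →L[ℂ] K)) →
    MatPosAlg (Matrix.of fun i j => φ (x i j))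

section Helpers

variable {A : Type*} [CStarAlgebra A]

lemma set_centralizer_isClosed (s : Set A) : IsClosed (Set.centralizer s) := by
  have : Set.centralizer s = ⋂ m ∈ s, {x : A | m * x = x * m} := by
    ext x
    simp [Set.mem_centralizer_iff, Set.mem_iInter]
  rw [this]
  exact isClosed_biInter fun m _ =>
    isClosed_eq (continuous_const.mul continuous_id) (continuous_id.mul continuous_const)

lemma mem_elemental_central {h x : A} (hh : ∀ b : A, h * b = b * h)
    (hx : x ∈ StarAlgebra.elemental ℂ h) (b : A) : x * b = b * x := by
  have hZc : IsClosed ((StarSubalgebra.centralizer ℂ (Set.univ : Set A)) : Set A) := by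
    rw [StarSubalgebra.coe_centralizer]
    exact set_centralizer_isClosed _
  have hmem : h ∈ StarSubalgebra.centralizer ℂ (Set.univ : Set A) :=
    (StarSubalgebra.mem_centralizer_iff (R := ℂ)).mpr fun g _ => ⟨(hh g).symm, (hh (star g)).symm⟩
  have hxZ := StarAlgebra.elemental.le_of_mem hZc hmem hx
  rw [StarSubalgebra.mem_centralizer_iff (R := ℂ)] at hxZ
  exact ((hxZ b (Set.mem_univ b)).1).symm

lemma cfc_mem_elemental' (f : ℂ → ℂ) (h : A) [IsStarNormal h] :
    cfc f h ∈ StarAlgebra.elemental ℂ h := by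
  by_cases hf : ContinuousOn f (spectrum ℂ h)
  · rw [cfc_apply f h, cfcHom_eq_of_isStarNormal h]
    exact SetLike.coe_mem _
  · rw [cfc_apply_of_not_continuousOn h hf]
    exact zero_mem _

end Helpers

/-- If a unital C*-algebra `A` has nontrivial centre, then no unital completely positive
map `φ : R → A` from an operator system `R ⊆ B(K)` is pure in `CP(R, A)`. -/
theorem ucp_map_into_algebra_with_nontrivial_centre_is_not_pure
    {A : Type*} [NormedRing A] [StarRing A] [CStarRing A] [CompleteSpace A]
    [NormedAlgebra ℂ A] [StarModule ℂ A]
    {K : Type*} [NormedAddCommGroup K] [InnerProductSpace ℂ K] [CompleteSpace K]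
    (a : A) (ha_central : ∀ b : A, a * b = b * a) (ha_nonscalar : ∀ lam : ℂ, a ≠ lam • 1)
    (R : Submodule ℂ (K →L[ℂ] K)) (hR1 : (1 : K →L[ℂ] K) ∈ R)
    (hRstar : ∀ x ∈ R, star x ∈ R)
    (φ : R →ₗ[ℂ] A) (hφcp : IsCPtoAlg R φ) (hφ1 : φ ⟨1, hR1⟩ = 1) :
    ¬ (∀ ϑ ω : R →ₗ[ℂ] A, IsCPtoAlg R ϑ → IsCPtoAlg R ω → ϑ + ω = φ →
        ∃ s : ℝ, 0 ≤ s ∧ s ≤ 1 ∧ ϑ = (s : ℂ) • φ ∧ ω = ((1 - s : ℝ) : ℂ) • φ) := by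
  intro hpure
  have ha0 : a ≠ 0 := fun h0 => ha_nonscalar 0 (by simp [h0])
  haveI : Nontrivial A := ⟨⟨a, 0, ha0⟩⟩
  letI : CStarAlgebra A := ⟨⟩
  -- star a is central
  have hstar_central : ∀ b : A, star a * b = b * star a := by
    intro b
    calc star a * b = star (star b * a) := by simp
      _ = star (a * star b) := by rw [ha_central]
      _ = b * star a := by simp
  -- a selfadjoint central nonscalar element
  obtain ⟨h, hsa, hcentral, hnonscalar⟩ :
      ∃ h : A, IsSelfAdjoint h ∧ (∀ b : A, h * b = b * h) ∧ (∀ lam : ℂ, h ≠ lam • 1) := by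
    set h₁ : A := (2 : ℂ)⁻¹ • (a + star a) with hh₁
    set h₂ : A := (Complex.I * (2 : ℂ)⁻¹) • (star a - a) with hh₂
    have hsa1 : IsSelfAdjoint h₁ := by
      rw [IsSelfAdjoint, hh₁, star_smul, star_add, star_star]
      simp [add_comm]
    have hsa2 : IsSelfAdjoint h₂ := by
      rw [IsSelfAdjoint, hh₂, star_smul, star_sub, star_star]
      have : star (Complex.I * (2 : ℂ)⁻¹) = -(Complex.I * (2 : ℂ)⁻¹) := by
        simp [Complex.ext_iff]
      rw [this, neg_smul, ← smul_neg, neg_sub]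
    have hc1 : ∀ b : A, h₁ * b = b * h₁ := by
      intro b
      rw [hh₁]
      simp [smul_mul_assoc, mul_smul_comm, add_mul, mul_add, ha_central, hstar_central]
    have hc2 : ∀ b : A, h₂ * b = b * h₂ := by
      intro b
      rw [hh₂]
      simp [smul_mul_assoc, mul_smul_comm, sub_mul, mul_sub, ha_central, hstar_central]
    have hdecomp : a = h₁ + Complex.I • h₂ := by
      rw [hh₁, hh₂, smul_smul]
      have : Complex.I * (Complex.I * (2 : ℂ)⁻¹) = -(2 : ℂ)⁻¹ := by
        rw [← mul_assoc, Complex.I_mul_I]; ring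
      rw [this]
      module
    rcases Classical.em (∀ lam : ℂ, h₁ ≠ lam • 1) with hH | hH
    · exact ⟨h₁, hsa1, hc1, hH⟩
    · push_neg at hH
      obtain ⟨lam, hlam⟩ := hH
      refine ⟨h₂, hsa2, hc2, fun mu hmu => ?_⟩
      apply ha_nonscalar (lam + Complex.I * mu)
      rw [hdecomp, hlam, hmu, smul_smul, ← add_smul]
  haveI hnormal : IsStarNormal h := hsa.isStarNormal
  set r : ℝ := ‖h‖ + 1 with hr_def
  have hr : (0 : ℝ) < r := by positivity
  set u : ℂ → ℝ := fun z => (z.re + r) / (2 * r) with hu_def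
  set f : ℂ → ℂ := fun z => ((Real.sqrt (u z) : ℝ) : ℂ) with hf_def
  set g : ℂ → ℂ := fun z => ((Real.sqrt (1 - u z) : ℝ) : ℂ) with hg_def
  have hu_cont : Continuous u := by
    apply Continuous.div_const
    exact Complex.continuous_re.add continuous_const
  have hfc : Continuous f := Complex.continuous_ofReal.comp (Real.continuous_sqrt.comp hu_cont)
  have hgc : Continuous g :=
    Complex.continuous_ofReal.comp (Real.continuous_sqrt.comp (continuous_const.sub hu_cont))
  have hspec : ∀ z ∈ spectrum ℂ h, z = (z.re : ℂ) ∧ 0 ≤ u z ∧ u z ≤ 1 := by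
    intro z hz
    have h1 : z = (z.re : ℂ) := hsa.mem_spectrum_eq_re hz
    have h2 : ‖z‖ ≤ ‖h‖ := spectrum.norm_le_norm_of_mem hz
    have h3 : |z.re| ≤ ‖h‖ := by
      rw [h1] at h2; simpa using h2
    have h4 := abs_le.mp h3
    refine ⟨h1, div_nonneg (by simp only [hr_def]; linarith [h4.1]) (by positivity), ?_⟩
    rw [div_le_one (by positivity)]
    simp only [hr_def]; linarith [h4.2]
  set d : A := cfc f h with hd_def
  set e : A := cfc g h with he_def
  have hd_sa : star d = d := by
    have hfs : (fun z => star (f z)) = f := by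
      funext z; simp [hf_def, Complex.conj_ofReal]
    rw [hd_def, ← cfc_star f h, hfs]
  have he_sa : star e = e := by
    have hgs : (fun z => star (g z)) = g := by
      funext z; simp [hg_def, Complex.conj_ofReal]
    rw [he_def, ← cfc_star g h, hgs]
  have hd_central : ∀ b : A, d * b = b * d := fun b =>
    mem_elemental_central hcentral (cfc_mem_elemental' f h) b
  have he_central : ∀ b : A, e * b = b * e := fun b =>
    mem_elemental_central hcentral (cfc_mem_elemental' g h) b
  -- d * d = cfc u h, etc.
  have hd2 : d * d = cfc (fun z => ((u z : ℝ) : ℂ)) h := by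
    rw [hd_def, ← cfc_mul f f h hfc.continuousOn hfc.continuousOn]
    apply cfc_congr
    intro z hz
    obtain ⟨-, hu0, -⟩ := hspec z hz
    simp only [hf_def]
    rw [← Complex.ofReal_mul, Real.mul_self_sqrt hu0]
  have he2 : e * e = cfc (fun z => ((1 - u z : ℝ) : ℂ)) h := by
    rw [he_def, ← cfc_mul g g h hgc.continuousOn hgc.continuousOn]
    apply cfc_congr
    intro z hz
    obtain ⟨-, -, hu1⟩ := hspec z hz
    simp only [hg_def]
    rw [← Complex.ofReal_mul, Real.mul_self_sqrt (by linarith)]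
  have hsum1 : d * d + e * e = 1 := by
    rw [hd2, he2, ← cfc_add h _ _ (by fun_prop) (by fun_prop)]
    have : (fun z => ((u z : ℝ) : ℂ) + ((1 - u z : ℝ) : ℂ)) = fun _ : ℂ => (1 : ℂ) := by
      funext z; push_cast; ring
    rw [this, cfc_const (1 : ℂ) h, map_one]
  have hee : e * e = 1 - d * d := eq_sub_of_add_eq' hsum1
  -- d * d is an affine expression in h
  set k : ℂ := ((2 * r : ℝ) : ℂ)⁻¹ with hk_def
  have hk0 : k ≠ 0 := inv_ne_zero (Complex.ofReal_ne_zero.mpr (by positivity))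
  have hc_eq : d * d = k • h + (k * (r : ℂ)) • 1 := by
    rw [hd2]
    have step1 : cfc (fun z => ((u z : ℝ) : ℂ)) h
        = cfc (fun z => k * z + k * (r : ℂ)) h := by
      apply cfc_congr
      intro z hz
      obtain ⟨h1, -, -⟩ := hspec z hz
      rw [h1]
      simp only [hu_def, hk_def]
      push_cast
      have : (2 * (r : ℂ)) ≠ 0 := by
        simpa using Complex.ofReal_ne_zero.mpr (by positivity : (2 * r : ℝ) ≠ 0)
      field_simp
      rw [Complex.ofReal_re]
    rw [step1, cfc_add h _ _ (by fun_prop) (by fun_prop), cfc_const_mul_id k h,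
      cfc_const (k * (r : ℂ)) h, Algebra.algebraMap_eq_smul_one]
  -- the two completely positive summands
  have key : ∀ w : A, star w = w → (∀ b : A, w * b = b * w) →
      IsCPtoAlg R ((LinearMap.mulLeft ℂ (w * w)).comp φ) := by
    intro w hw hwc m x hx
    obtain ⟨y, hy⟩ := hφcp m x hx
    refine ⟨Matrix.of fun i j => w * y i j, ?_⟩
    ext i j
    have hyij : φ (x i j) = ∑ k', star (y k' i) * y k' j := by
      have := congrFun (congrFun hy i) j
      simpa [Matrix.mul_apply, Matrix.star_apply] using this
    have entry : ∀ k' : Fin m, star (w * y k' i) * (w * y k' j)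
        = w * w * (star (y k' i) * y k' j) := by
      intro k'
      rw [star_mul, hw]
      calc star (y k' i) * w * (w * y k' j)
          = w * star (y k' i) * (w * y k' j) := by rw [← hwc (star (y k' i))]
        _ = w * (star (y k' i) * (w * y k' j)) := by rw [mul_assoc]
        _ = w * (star (y k' i) * w * y k' j) := by rw [mul_assoc (star (y k' i))]
        _ = w * (w * star (y k' i) * y k' j) := by rw [← hwc (star (y k' i))]
        _ = w * w * (star (y k' i) * y k' j) := by simp [mul_assoc]
    simp only [Matrix.mul_apply, Matrix.star_apply, Matrix.of_apply, LinearMap.comp_apply,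
      LinearMap.mulLeft_apply]
    rw [hyij, Finset.mul_sum]
    exact Finset.sum_congr rfl fun k' _ => (entry k').symm
  set ϑ : R →ₗ[ℂ] A := (LinearMap.mulLeft ℂ (d * d)).comp φ with hϑ_def
  set ω : R →ₗ[ℂ] A := (LinearMap.mulLeft ℂ (e * e)).comp φ with hω_def
  have hϑcp : IsCPtoAlg R ϑ := key d hd_sa hd_central
  have hωcp : IsCPtoAlg R ω := key e he_sa he_central
  have hsum_maps : ϑ + ω = φ := by
    ext x
    simp only [hϑ_def, hω_def, LinearMap.add_apply, LinearMap.comp_apply,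
      LinearMap.mulLeft_apply]
    rw [hee, ← add_mul]
    rw [add_sub_cancel, one_mul]
  obtain ⟨s, -, -, hθs, -⟩ := hpure ϑ ω hϑcp hωcp hsum_maps
  have heval := LinearMap.congr_fun hθs ⟨1, hR1⟩
  simp only [hϑ_def, LinearMap.comp_apply, LinearMap.mulLeft_apply, LinearMap.smul_apply,
    hφ1, mul_one, smul_eq_mul] at heval
  -- heval : d * d = (s : ℂ) • 1  (after mul_one / smul on 1)
  rw [hc_eq] at heval
  have hsc : k • h = ((s : ℂ) - k * (r : ℂ)) • 1 := by
    rw [sub_smul]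
    rw [eq_sub_iff_add_eq]
    exact heval
  apply hnonscalar (k⁻¹ * ((s : ℂ) - k * (r : ℂ)))
  have := congrArg (fun x => k⁻¹ • x) hsc
  simpa [smul_smul, inv_mul_cancel₀ hk0] using this
end

section
/- Let T = X_1 = { [[α, β₁],[β₂, α]] : α, β₁, β₂ ∈ ℂ } ⊆ M_2(ℂ) and let R = { [[α, β],[β, α]] : α, β ∈ ℂ } ⊆ T, an operator subsystem of T of linear codimension 1. Then the inclusion map R ↪ T (the restriction to R of the identity map on T) is not pure in the cone CP(R, T): there exist completely positive linear maps ϑ, ω : R → T with ϑ + ω equal to the inclusion map, such that ϑ is not a nonnegative scalar multiple of the inclusion map. (Hence the restriction of a pure completely positive map to an operator subsystem of codimension 1 need not be pure.) -/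
open scoped ComplexOrder
open scoped Matrix

/-- The `(2m) × (2m)` matrix obtained from an `m × m` array of `2 × 2` matrices. -/
def blockMat {m : ℕ} (x : Fin m → Fin m → Matrix (Fin 2) (Fin 2) ℂ) :
    Matrix (Fin m × Fin 2) (Fin m × Fin 2) ℂ :=
  Matrix.of fun p q => x p.1 q.1 p.2 q.2

/-- Complete positivity for a linear map between matrix operator systems in `M₂(ℂ)`. -/
def IsCP (S T : Submodule ℂ (Matrix (Fin 2) (Fin 2) ℂ)) (φ : S →ₗ[ℂ] T) : Prop :=
  ∀ (m : ℕ) (x : Fin m → Fin m → S),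
    (blockMat fun i j => (x i j : Matrix (Fin 2) (Fin 2) ℂ)).PosSemidef →
    (blockMat fun i j => (φ (x i j) : Matrix (Fin 2) (Fin 2) ℂ)).PosSemidef

/-- The operator system `T = X₁ = { [[α, β₁],[β₂, α]] } ⊆ M₂(ℂ)`. -/
noncomputable def TSys : Submodule ℂ (Matrix (Fin 2) (Fin 2) ℂ) :=
  Submodule.span ℂ {x | ∃ α β₁ β₂ : ℂ, x = !![α, β₁; β₂, α]}

/-- The operator subsystem `R = { [[α, β],[β, α]] } ⊆ T` of codimension `1`. -/
noncomputable def RSys : Submodule ℂ (Matrix (Fin 2) (Fin 2) ℂ) :=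
  Submodule.span ℂ {x | ∃ α β : ℂ, x = !![α, β; β, α]}

theorem RSys_le_TSys : RSys ≤ TSys := by
  apply Submodule.span_mono
  rintro x ⟨α, β, rfl⟩
  exact ⟨α, β, β, rfl⟩

/-- conjugation by `P` as a linear map. -/
noncomputable def conjLin (P : Matrix (Fin 2) (Fin 2) ℂ) :
    Matrix (Fin 2) (Fin 2) ℂ →ₗ[ℂ] Matrix (Fin 2) (Fin 2) ℂ where
  toFun x := Pᴴ * x * P
  map_add' x y := by simp [mul_add, add_mul]
  map_smul' c x := by simp [Matrix.mul_smul, Matrix.smul_mul]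

/-- the big intertwiner -/
def bigD {m : ℕ} (P : Matrix (Fin 2) (Fin 2) ℂ) :
    Matrix (Fin m × Fin 2) (Fin m × Fin 2) ℂ :=
  Matrix.of fun p q => if p.1 = q.1 then P p.2 q.2 else 0

lemma blockMat_conj {m : ℕ} (P : Matrix (Fin 2) (Fin 2) ℂ)
    (x : Fin m → Fin m → Matrix (Fin 2) (Fin 2) ℂ) :
    blockMat (fun i j => Pᴴ * x i j * P) = (bigD P)ᴴ * blockMat x * bigD P := by
  ext ⟨i, a⟩ ⟨j, b⟩
  simp [blockMat, bigD, Matrix.mul_apply, Matrix.conjTranspose_apply,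
    Fintype.sum_prod_type, Finset.mul_sum, Finset.sum_mul, apply_ite, mul_comm, mul_left_comm]

lemma conjLin_isCP (P : Matrix (Fin 2) (Fin 2) ℂ)
    (h : ∀ x : Matrix (Fin 2) (Fin 2) ℂ, Pᴴ * x * P ∈ TSys) :
    IsCP RSys TSys (LinearMap.codRestrict TSys ((conjLin P).comp RSys.subtype)
      (fun x => h x)) := by
  intro m x hx
  have : (blockMat fun i j =>
      ((LinearMap.codRestrict TSys ((conjLin P).comp RSys.subtype) (fun x => h x)) (x i j) :
        Matrix (Fin 2) (Fin 2) ℂ)) = blockMat (fun i j => Pᴴ * (x i j : Matrix (Fin 2) (Fin 2) ℂ) * P) := rfl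
  rw [this, blockMat_conj]
  exact hx.conjTranspose_mul_mul_same _

noncomputable def Pp : Matrix (Fin 2) (Fin 2) ℂ := !![1/2, 1/2; 1/2, 1/2]
noncomputable def Pm : Matrix (Fin 2) (Fin 2) ℂ := !![1/2, -(1/2); -(1/2), 1/2]

lemma memPp (x : Matrix (Fin 2) (Fin 2) ℂ) : Ppᴴ * x * Pp ∈ TSys := by
  apply Submodule.subset_span
  refine ⟨(x 0 0 + x 0 1 + x 1 0 + x 1 1)/4, (x 0 0 + x 0 1 + x 1 0 + x 1 1)/4,
    (x 0 0 + x 0 1 + x 1 0 + x 1 1)/4, ?_⟩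
  ext i j
  fin_cases i <;> fin_cases j <;>
    simp [Pp, Matrix.mul_apply, Fin.sum_univ_two, Matrix.conjTranspose_apply, map_ofNat] <;> ring

lemma memPm (x : Matrix (Fin 2) (Fin 2) ℂ) : Pmᴴ * x * Pm ∈ TSys := by
  apply Submodule.subset_span
  refine ⟨(x 0 0 - x 0 1 - x 1 0 + x 1 1)/4, -((x 0 0 - x 0 1 - x 1 0 + x 1 1)/4),
    -((x 0 0 - x 0 1 - x 1 0 + x 1 1)/4), ?_⟩
  ext i j
  fin_cases i <;> fin_cases j <;>
    simp [Pm, Matrix.mul_apply, Fin.sum_univ_two, Matrix.conjTranspose_apply, map_ofNat] <;> ring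

lemma sum_conj (x : Matrix (Fin 2) (Fin 2) ℂ) (hx : x ∈ RSys) :
    Ppᴴ * x * Pp + Pmᴴ * x * Pm = x := by
  induction hx using Submodule.span_induction with
  | mem y hy =>
    obtain ⟨α, β, rfl⟩ := hy
    ext i j
    fin_cases i <;> fin_cases j <;>
      simp [Pp, Pm, Matrix.mul_apply, Fin.sum_univ_two, Matrix.conjTranspose_apply, map_ofNat] <;>
      ring
  | zero => simp
  | add y z _ _ h1 h2 =>
    simp only [mul_add, add_mul]
    conv_rhs => rw [← h1, ← h2]
    abel
  | smul c y _ h =>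
    simp only [Matrix.mul_smul, Matrix.smul_mul, ← smul_add, h]


/-- The inclusion map `R ↪ T` (the restriction to `R` of the identity map on `T`) is not
pure in `CP(R, T)`: it decomposes as a sum of two completely positive maps, neither of
which is a nonnegative multiple of the inclusion.  In particular the restriction of a
pure completely positive map to an operator subsystem of codimension `1` need not be
pure. -/
theorem inclusion_of_RSys_into_TSys_is_not_pure :
    ∃ ϑ ω : RSys →ₗ[ℂ] TSys, IsCP RSys TSys ϑ ∧ IsCP RSys TSys ω ∧
      ϑ + ω = Submodule.inclusion RSys_le_TSys ∧
      ∀ s : ℝ, 0 ≤ s → ϑ ≠ (s : ℂ) • Submodule.inclusion RSys_le_TSys := by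
  refine ⟨LinearMap.codRestrict TSys ((conjLin Pp).comp RSys.subtype) (fun x => memPp x),
    LinearMap.codRestrict TSys ((conjLin Pm).comp RSys.subtype) (fun x => memPm x),
    conjLin_isCP Pp memPp, conjLin_isCP Pm memPm, ?_, ?_⟩
  · apply LinearMap.ext; intro a
    exact Subtype.ext (sum_conj a.1 a.2)
  · intro s hs hEq
    have hI : (!![1, 0; 0, 1] : Matrix (Fin 2) (Fin 2) ℂ) ∈ RSys :=
      Submodule.subset_span ⟨1, 0, by norm_num⟩
    have := congrArg (fun f => ((f ⟨_, hI⟩ : TSys) : Matrix (Fin 2) (Fin 2) ℂ) 0 1) hEq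
    simp [conjLin, Pp, Matrix.mul_apply, Fin.sum_univ_two,
      Submodule.inclusion, Matrix.conjTranspose_apply, map_ofNat] at this
end
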